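/- arXiv:2408.07316 — 2 statements merged into one kernel-verified Lean document; each statement's English description precedes it below -/
import Mathlib

section
/- Let B ⊆ X, p : E → B a continuous map, and r : X → B a retraction (r restricted to B is the identity). Then sec_r(p) = sec(p). -/
open Set

/-- Sectional number: minimal cardinality of open covers of the codomain,
each member admitting a strict local section. -/
noncomputable def secNum {X Y : Type*} [TopologicalSpace X] [TopologicalSpace Y]
    (f : C(X, Y)) : ℕ∞ :=
  sInf {n : ℕ∞ | ∃ k : ℕ, n = (k : ℕ∞) ∧
    ∃ U : Fin k → Set Y, (∀ i, IsOpen (U i)) ∧ (⋃ i, U i) = Set.univ ∧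
      ∀ i, ∃ s : C(U i, X), ∀ y : U i, f (s y) = (y : Y)}

/-- Sectional category: minimal cardinality of open covers of the codomain,
each member admitting a homotopy local section. -/
noncomputable def secatNum {X Y : Type*} [TopologicalSpace X] [TopologicalSpace Y]
    (f : C(X, Y)) : ℕ∞ :=
  sInf {n : ℕ∞ | ∃ k : ℕ, n = (k : ℕ∞) ∧
    ∃ U : Fin k → Set Y, (∀ i, IsOpen (U i)) ∧ (⋃ i, U i) = Set.univ ∧
      ∀ i, ∃ s : C(U i, X),
        (f.comp s).Homotopic ⟨Subtype.val, continuous_subtype_val⟩}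

/-- Lusternik–Schnirelmann category (normalized: cat(contractible) = 1). -/
noncomputable def catLS (X : Type*) [TopologicalSpace X] : ℕ∞ :=
  sInf {n : ℕ∞ | ∃ k : ℕ, n = (k : ℕ∞) ∧
    ∃ U : Fin k → Set X, (∀ i, IsOpen (U i)) ∧ (⋃ i, U i) = Set.univ ∧
      ∀ i, ∃ x₀ : X,
        ContinuousMap.Homotopic ⟨Subtype.val, continuous_subtype_val⟩
          (ContinuousMap.const (U i) x₀)}

/-- Relative sectional number of `p` with respect to `g`: minimal cardinality of
open covers of `X`, each member admitting a continuous lift of `g` through `p`. -/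
noncomputable def relSecNum {X E B : Type*} [TopologicalSpace X] [TopologicalSpace E]
    [TopologicalSpace B] (p : C(E, B)) (g : C(X, B)) : ℕ∞ :=
  sInf {n : ℕ∞ | ∃ k : ℕ, n = (k : ℕ∞) ∧
    ∃ U : Fin k → Set X, (∀ i, IsOpen (U i)) ∧ (⋃ i, U i) = Set.univ ∧
      ∀ i, ∃ σ : C(U i, E), ∀ x : U i, p (σ x) = g (x : X)}

theorem stmt_13 {X E : Type*} [TopologicalSpace X] [TopologicalSpace E]
    (B : Set X) (p : C(E, B)) (r : C(X, B)) (hr : ∀ b : B, r (b : X) = b) :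
    relSecNum p r = secNum p := by
  unfold relSecNum secNum
  congr 1
  ext n
  constructor
  · rintro ⟨k, rfl, V, hVopen, hVcover, hV⟩
    refine ⟨k, rfl, fun i => Subtype.val ⁻¹' V i,
      fun i => (hVopen i).preimage continuous_subtype_val, ?_, ?_⟩
    · ext y
      have : (y : X) ∈ ⋃ i, V i := hVcover ▸ Set.mem_univ _
      simpa using this
    · intro i
      obtain ⟨σ, hσ⟩ := hV i
      refine ⟨⟨fun y => σ ⟨y.1.1, y.2⟩, σ.continuous.comp
        (Continuous.subtype_mk (continuous_subtype_val.comp continuous_subtype_val) _)⟩, ?_⟩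
      intro y
      have h := hσ ⟨y.1.1, y.2⟩
      simp only [ContinuousMap.coe_mk] at h ⊢
      rw [h, hr]
  · rintro ⟨k, rfl, U, hUopen, hUcover, hU⟩
    refine ⟨k, rfl, fun i => r ⁻¹' U i,
      fun i => (hUopen i).preimage r.continuous, ?_, ?_⟩
    · ext x
      have : r x ∈ ⋃ i, U i := hUcover ▸ Set.mem_univ _
      simpa using this
    · intro i
      obtain ⟨s, hs⟩ := hU i
      refine ⟨⟨fun x => s ⟨r x.1, x.2⟩, s.continuous.comp
        (Continuous.subtype_mk (r.continuous.comp continuous_subtype_val) _)⟩, ?_⟩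
      intro x
      exact hs ⟨r x.1, x.2⟩
end

section
/- Let m ≥ 1, X a topological space, and g : X → D^m a continuous map into the closed unit disc in ℝ^m. Then (X, D^m; g) fails the coincidence property if and only if there exists a continuous map φ : X → S^{m-1} such that φ(x) = g(x) for every x ∈ g⁻¹(S^{m-1}). -/
open Set

open Metric

set_option maxHeartbeats 1000000

open Set Metric

lemma aux_radial {X : Type*} [TopologicalSpace X]
    {E : Type*} [NormedAddCommGroup E] [InnerProductSpace ℝ E]
    (G F : X → E) (hGc : Continuous G) (hFc : Continuous F)
    (hG1 : ∀ x, ‖G x‖ ≤ 1) (hF1 : ∀ x, ‖F x‖ ≤ 1)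
    (hne : ∀ x, G x ≠ F x) :
    ∃ φ : X → E, Continuous φ ∧ (∀ x, ‖φ x‖ = 1) ∧
      (∀ x, ‖G x‖ = 1 → φ x = G x) := by
  classical
  set v : X → E := fun x => G x - F x with hv
  have hvne : ∀ x, v x ≠ 0 := fun x hx => hne x (sub_eq_zero.mp hx)
  set a : X → ℝ := fun x => ‖v x‖ ^ 2 with haa
  set b : X → ℝ := fun x => 2 * (inner ℝ (G x) (v x) : ℝ) with hbb
  set c : X → ℝ := fun x => ‖G x‖ ^ 2 - 1 with hcc
  have ha : ∀ x, 0 < a x := fun x => pow_pos (norm_pos_iff.mpr (hvne x)) 2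
  have hc : ∀ x, c x ≤ 0 := by
    intro x
    have h1 := hG1 x
    have h0 := norm_nonneg (G x)
    simp only [hcc]
    nlinarith
  set t : X → ℝ := fun x => (-b x + Real.sqrt (b x ^ 2 - 4 * a x * c x)) / (2 * a x) with ht
  have hΔ : ∀ x, 0 ≤ b x ^ 2 - 4 * a x * c x := by
    intro x
    have := ha x; have := hc x
    nlinarith [sq_nonneg (b x)]
  have hroot : ∀ x, a x * t x ^ 2 + b x * t x + c x = 0 := by
    intro x
    have hs : Real.sqrt (b x ^ 2 - 4 * a x * c x) ^ 2 = b x ^ 2 - 4 * a x * c x :=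
      Real.sq_sqrt (hΔ x)
    have hax := (ha x).ne'
    simp only [ht]
    set s := Real.sqrt (b x ^ 2 - 4 * a x * c x) with hsdef
    field_simp
    nlinarith [hs]
  set φ : X → E := fun x => G x + t x • v x with hφ
  have hnorm : ∀ x, ‖φ x‖ = 1 := by
    intro x
    have hsq : ‖φ x‖ ^ 2 = ‖G x‖ ^ 2 + 2 * (t x * (inner ℝ (G x) (v x) : ℝ)) + t x ^ 2 * ‖v x‖ ^ 2 := by
      simp only [hφ]
      rw [@norm_add_sq_real, real_inner_smul_right, norm_smul, mul_pow, Real.norm_eq_abs, sq_abs]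
    have h1 : ‖φ x‖ ^ 2 = 1 := by
      have := hroot x
      simp only [haa, hbb, hcc] at this
      nlinarith [hsq]
    have hn := norm_nonneg (φ x)
    nlinarith [h1]
  refine ⟨φ, ?_, hnorm, ?_⟩
  · have hvc : Continuous v := hGc.sub hFc
    have hac : Continuous a := (hvc.norm).pow 2
    have hbc : Continuous b := continuous_const.mul (hGc.inner hvc)
    have hcc' : Continuous c := ((hGc.norm).pow 2).sub continuous_const
    have h1 : Continuous fun x => -b x + Real.sqrt (b x ^ 2 - 4 * a x * c x) := by
      fun_prop
    have h2 : Continuous fun x => 2 * a x := continuous_const.mul hac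
    have htc : Continuous t := by
      rw [ht]
      exact h1.div h2 fun x => mul_ne_zero two_ne_zero (ha x).ne'
    rw [hφ]
    exact hGc.add (htc.smul hvc)
  · intro x hx
    have hcx : c x = 0 := by simp [hcc, hx]
    have hbx : 0 ≤ b x := by
      have h1 : (inner ℝ (G x) (F x) : ℝ) ≤ ‖G x‖ * ‖F x‖ := real_inner_le_norm _ _
      have h2 : (inner ℝ (G x) (v x) : ℝ) = ‖G x‖ ^ 2 - inner ℝ (G x) (F x) := by
        simp [hv, inner_sub_right, real_inner_self_eq_norm_sq]
      have := hF1 x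
      simp only [hbb]
      rw [hx] at h1 h2
      nlinarith
    have htx : t x = 0 := by
      simp only [ht, hcx]
      rw [mul_zero, sub_zero, Real.sqrt_sq_eq_abs, abs_of_nonneg hbx]
      simp
    simp [hφ, htx]

theorem stmt_19 {X : Type*} [TopologicalSpace X] (m : ℕ) (hm : 1 ≤ m)
    (g : C(X, ↥(Metric.closedBall (0 : EuclideanSpace ℝ (Fin m)) 1))) :
    (¬ ∀ f : C(X, ↥(Metric.closedBall (0 : EuclideanSpace ℝ (Fin m)) 1)),
        ∃ x, f x = g x) ↔
      ∃ φ : C(X, ↥(Metric.sphere (0 : EuclideanSpace ℝ (Fin m)) 1)),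
        ∀ x, ((g x : EuclideanSpace ℝ (Fin m)) ∈
            Metric.sphere (0 : EuclideanSpace ℝ (Fin m)) 1) →
          (φ x : EuclideanSpace ℝ (Fin m)) = (g x : EuclideanSpace ℝ (Fin m)) := by
  constructor
  · intro h
    push_neg at h
    obtain ⟨f, hf⟩ := h
    obtain ⟨φ₀, hφc, hφ1, hφg⟩ := aux_radial
      (fun x => ((g x : EuclideanSpace ℝ (Fin m))))
      (fun x => ((f x : EuclideanSpace ℝ (Fin m))))
      (continuous_subtype_val.comp g.continuous)
      (continuous_subtype_val.comp f.continuous)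
      (fun x => by
        have := (g x).2; rwa [Metric.mem_closedBall, dist_zero_right] at this)
      (fun x => by
        have := (f x).2; rwa [Metric.mem_closedBall, dist_zero_right] at this)
      (fun x hx => hf x (Subtype.ext hx.symm))
    have hmem : ∀ x, φ₀ x ∈ Metric.sphere (0 : EuclideanSpace ℝ (Fin m)) 1 :=
      fun x => mem_sphere_zero_iff_norm.mpr (hφ1 x)
    refine ⟨⟨fun x => ⟨φ₀ x, hmem x⟩, hφc.subtype_mk hmem⟩, ?_⟩
    intro x hx
    exact hφg x (mem_sphere_zero_iff_norm.mp hx)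
  · rintro ⟨φ, hφ⟩ h
    have hmem : ∀ x, -(φ x : EuclideanSpace ℝ (Fin m)) ∈
        Metric.closedBall (0 : EuclideanSpace ℝ (Fin m)) 1 := by
      intro x
      rw [Metric.mem_closedBall, dist_zero_right, norm_neg,
        mem_sphere_zero_iff_norm.mp (φ x).2]
    obtain ⟨x, hx⟩ := h ⟨fun x => ⟨-(φ x : EuclideanSpace ℝ (Fin m)), hmem x⟩,
      Continuous.subtype_mk (continuous_subtype_val.comp φ.continuous).neg _⟩
    have hval : -(φ x : EuclideanSpace ℝ (Fin m)) = (g x : EuclideanSpace ℝ (Fin m)) :=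
      congrArg Subtype.val hx
    have hgs : (g x : EuclideanSpace ℝ (Fin m)) ∈
        Metric.sphere (0 : EuclideanSpace ℝ (Fin m)) 1 := by
      rw [mem_sphere_zero_iff_norm, ← hval, norm_neg]
      exact mem_sphere_zero_iff_norm.mp (φ x).2
    have he := hφ x hgs
    rw [← hval] at he
    have h2 : (2 : ℝ) • (φ x : EuclideanSpace ℝ (Fin m)) = 0 := by
      rw [two_smul]
      nth_rewrite 2 [he]
      simp
    have h3 : (φ x : EuclideanSpace ℝ (Fin m)) = 0 := by
      rcases smul_eq_zero.mp h2 with h | h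
      · norm_num at h
      · exact h
    have := mem_sphere_zero_iff_norm.mp (φ x).2
    rw [h3] at this
    simp at this
end
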